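/- arXiv:2011.01013 — 2 statements merged into one kernel-verified Lean document; each statement's English description precedes it below -/
import Mathlib

section
/- Let y* ∈ [2,3], ρ₀ > 1/3, T > 0, and let (ρ, ω) be a left solution with data ρ₀ on [0, T). If z₀ ∈ (0, T) satisfies ρ(z₀) > 1/(y*·z₀), then ρ(z) > 1/(y*·z) for all z ∈ [z₀, T). -/
/-- The rescaled self-similar isothermal Euler–Poisson system with parameter `y = y*`,
at the point `z`. -/
def EPSys (y : ℝ) (ρ ω : ℝ → ℝ) (z : ℝ) : Prop :=
  deriv ρ z =
    -(2 * y ^ 2 * z * ω z * ρ z * (ρ z - ω z)) / (1 - y ^ 2 * z ^ 2 * (ω z) ^ 2) ∧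
  deriv ω z =
    (1 - 3 * ω z) / z +
      2 * y ^ 2 * z * (ω z) ^ 2 * (ρ z - ω z) / (1 - y ^ 2 * z ^ 2 * (ω z) ^ 2)

/-- A left solution with data `ρ₀` on `[0, T)`: continuous on `[0,T)`, real analytic
near the origin, with `ρ(0) = ρ₀`, `ω(0) = 1/3`, differentiable on `(0,T)` where it
solves the system and stays subsonic. -/
def LeftSol (y ρ₀ T : ℝ) (ρ ω : ℝ → ℝ) : Prop :=
  ContinuousOn ρ (Set.Ico 0 T) ∧ ContinuousOn ω (Set.Ico 0 T) ∧
  AnalyticAt ℝ ρ 0 ∧ AnalyticAt ℝ ω 0 ∧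
  ρ 0 = ρ₀ ∧ ω 0 = 1 / 3 ∧
  (∀ z ∈ Set.Ioo (0 : ℝ) T,
    DifferentiableAt ℝ ρ z ∧ DifferentiableAt ℝ ω z ∧ EPSys y ρ ω z) ∧
  (∀ z ∈ Set.Ioo (0 : ℝ) T, 0 < 1 - y ^ 2 * z ^ 2 * (ω z) ^ 2)

lemma key_pos (y z w : ℝ) (hy : 2 ≤ y) (hz : 0 < z)
    (hD : 0 < 1 - y ^ 2 * z ^ 2 * w ^ 2) :
    0 < -(2 * y ^ 2 * z * w * (1 / (y * z)) * ((1 / (y * z)) - w)) /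
        (1 - y ^ 2 * z ^ 2 * w ^ 2) + 1 / (y * z ^ 2) := by
  have hy0 : (0:ℝ) < y := by linarith
  have ht1 : 0 < 1 - y * z * w := by nlinarith [sq_nonneg (1 + y*z*w)]
  have ht2 : 0 < 1 + y * z * w := by nlinarith [sq_nonneg (1 - y*z*w)]
  have hEq : -(2 * y ^ 2 * z * w * (1 / (y * z)) * ((1 / (y * z)) - w)) /
        (1 - y ^ 2 * z ^ 2 * w ^ 2) + 1 / (y * z ^ 2)
      = (1 - y * z * w) / (y * z ^ 2 * (1 + y * z * w)) := by
    have hfac : 1 - y ^ 2 * z ^ 2 * w ^ 2 = (1 - y*z*w) * (1 + y*z*w) := by ring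
    rw [hfac]
    field_simp
    ring
  rw [hEq]
  positivity


/-- Once `ρ` exceeds the threshold `1/(y*z)`, it stays above it. -/
theorem left_solution_threshold_invariance
    (y ρ₀ T : ℝ) (hy : y ∈ Set.Icc (2 : ℝ) 3) (hρ₀ : 1 / 3 < ρ₀) (hT : 0 < T)
    (ρ ω : ℝ → ℝ) (h : LeftSol y ρ₀ T ρ ω)
    (z₀ : ℝ) (hz₀ : z₀ ∈ Set.Ioo (0 : ℝ) T)
    (hthr : 1 / (y * z₀) < ρ z₀) :
    ∀ z ∈ Set.Ico z₀ T, 1 / (y * z) < ρ z := by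
  obtain ⟨hρc, hωc, _, _, _, _, hsys, hsub⟩ := h
  have hy2 : (2:ℝ) ≤ y := hy.1
  have hy0 : (0:ℝ) < y := by linarith
  have hz₀0 : 0 < z₀ := hz₀.1
  have hz₀T : z₀ < T := hz₀.2
  -- the gap function
  set g : ℝ → ℝ := fun z => ρ z - 1 / (y * z) with hg
  by_contra hcon
  push_neg at hcon
  obtain ⟨z₂, hz₂, hz₂le⟩ := hcon
  have hz₂0 : 0 < z₂ := lt_of_lt_of_le hz₀0 hz₂.1
  have hz₂T : z₂ < T := hz₂.2
  have hz₀z₂ : z₀ < z₂ := by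
    rcases lt_or_eq_of_le hz₂.1 with h' | h'
    · exact h'
    · rw [← h'] at hz₂le; linarith
  -- g is continuous on [z₀, z₂]
  have hsubset : Set.Icc z₀ z₂ ⊆ Set.Ico 0 T := fun x hx =>
    ⟨le_of_lt (lt_of_lt_of_le hz₀0 hx.1), lt_of_le_of_lt hx.2 hz₂T⟩
  have hgc : ContinuousOn g (Set.Icc z₀ z₂) := by
    apply ContinuousOn.sub (hρc.mono hsubset)
    apply ContinuousOn.div continuousOn_const
    · exact (continuous_const.mul continuous_id).continuousOn
    · intro x hx
      have : 0 < x := lt_of_lt_of_le hz₀0 hx.1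
      positivity
  -- the bad set
  set S : Set ℝ := Set.Icc z₀ z₂ ∩ {z | g z ≤ 0} with hS
  have hSne : S.Nonempty := ⟨z₂, ⟨le_of_lt hz₀z₂, le_refl _⟩, sub_nonpos.mpr hz₂le⟩
  have hSbdd : BddBelow S := ⟨z₀, fun x hx => hx.1.1⟩
  have hSclosed : IsClosed S := by
    have := hgc.preimage_isClosed_of_isClosed isClosed_Icc isClosed_Iic (t := Set.Iic 0)
    convert this using 1
    rfl
  set z₁ : ℝ := sInf S with hz₁def
  have hz₁S : z₁ ∈ S := hSclosed.csInf_mem hSne hSbdd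
  have hz₁Icc : z₁ ∈ Set.Icc z₀ z₂ := hz₁S.1
  have hgz₁ : g z₁ ≤ 0 := hz₁S.2
  have hgz₀ : 0 < g z₀ := sub_pos.mpr hthr
  have hz₀z₁ : z₀ < z₁ := by
    rcases lt_or_eq_of_le hz₁Icc.1 with h' | h'
    · exact h'
    · rw [← h'] at hgz₁; linarith
  have hz₁0 : 0 < z₁ := lt_of_lt_of_le hz₀0 hz₁Icc.1
  have hz₁T : z₁ < T := lt_of_le_of_lt hz₁Icc.2 hz₂T
  -- g > 0 strictly before z₁
  have hgpos : ∀ x ∈ Set.Ico z₀ z₁, 0 < g x := by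
    intro x hx
    by_contra hxle
    push_neg at hxle
    have hxS : x ∈ S := ⟨⟨hx.1, le_of_lt (lt_of_lt_of_le hx.2 hz₁Icc.2)⟩, hxle⟩
    exact absurd (csInf_le hSbdd hxS) (not_le.mpr hx.2)
  -- g z₁ = 0 by continuity from the left
  have hnb : (nhdsWithin z₁ (Set.Ico z₀ z₁)).NeBot := by
    rw [mem_closure_iff_nhdsWithin_neBot.symm]
    rw [closure_Ico (ne_of_lt hz₀z₁)]
    exact ⟨le_of_lt hz₀z₁, le_refl _⟩
  have hgz₁0 : g z₁ = 0 := by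
    refine le_antisymm hgz₁ ?_
    have hct : ContinuousWithinAt g (Set.Ico z₀ z₁) z₁ :=
      (hgc z₁ hz₁Icc).mono (Set.Ico_subset_Icc_self.trans (Set.Icc_subset_Icc_right hz₁Icc.2))
    exact ge_of_tendsto hct
      (eventually_mem_nhdsWithin.mono fun x hx => (hgpos x hx).le)
  have hρz₁ : ρ z₁ = 1 / (y * z₁) := by
    have : ρ z₁ - 1 / (y * z₁) = 0 := hgz₁0
    linarith
  -- derivative of g at z₁
  obtain ⟨hdρ, _, hEP⟩ := hsys z₁ ⟨hz₁0, hz₁T⟩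
  have hD : 0 < 1 - y ^ 2 * z₁ ^ 2 * (ω z₁) ^ 2 := hsub z₁ ⟨hz₁0, hz₁T⟩
  have hthreshderiv : HasDerivAt (fun z => 1 / (y * z)) (-(1 / (y * z₁ ^ 2))) z₁ := by
    have h1 : HasDerivAt (fun z : ℝ => y * z) y z₁ := by
      simpa using (hasDerivAt_id z₁).const_mul y
    have h2 := h1.inv (by positivity)
    have : -y / (y * z₁) ^ 2 = -(1 / (y * z₁ ^ 2)) := by
      field_simp
    simpa [one_div, this, Pi.inv_def] using h2.congr_deriv this
  have hgd : HasDerivAt g (deriv ρ z₁ + 1 / (y * z₁ ^ 2)) z₁ := by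
    have := (hdρ.hasDerivAt).sub hthreshderiv
    simpa [hg, sub_neg_eq_add, Pi.sub_def] using this
  -- the derivative is positive by the ODE
  have hdpos : 0 < deriv ρ z₁ + 1 / (y * z₁ ^ 2) := by
    rw [hEP.1, hρz₁]
    exact key_pos y z₁ (ω z₁) hy2 hz₁0 hD
  -- but the derivative is ≤ 0 since g > 0 on [z₀, z₁) and g z₁ = 0
  have hnb' : (nhdsWithin z₁ (Set.Ioo z₀ z₁)).NeBot := by
    rw [mem_closure_iff_nhdsWithin_neBot.symm, closure_Ioo (ne_of_lt hz₀z₁)]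
    exact ⟨le_of_lt hz₀z₁, le_refl _⟩
  have hdle : deriv ρ z₁ + 1 / (y * z₁ ^ 2) ≤ 0 := by
    have hslope : Filter.Tendsto (slope g z₁) (nhdsWithin z₁ (Set.Ioo z₀ z₁))
        (nhds (deriv ρ z₁ + 1 / (y * z₁ ^ 2))) := by
      have h1 := hgd.hasDerivWithinAt (s := Set.Ioo z₀ z₁)
      rw [hasDerivWithinAt_iff_tendsto_slope] at h1
      exact h1.mono_left (nhdsWithin_mono z₁ (by
        intro x hx
        exact ⟨hx, ne_of_lt hx.2⟩))
    refine le_of_tendsto hslope ?_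
    filter_upwards [eventually_mem_nhdsWithin] with x hx
    have hgx : 0 < g x := hgpos x ⟨le_of_lt hx.1, hx.2⟩
    have : slope g z₁ x = (g x - g z₁) / (x - z₁) := by
      rw [slope_def_field]
    rw [this, hgz₁0, sub_zero]
    apply le_of_lt
    apply div_neg_of_pos_of_neg hgx
    linarith [hx.2]
  linarith
end

section
/- There exists η > 0 with the following property. Let y* ∈ [2,3], ρ₀ ≥ 1/3, and set Z = η·ρ₀^{−3/4}. Let ρ, ω : [0, Z] → ℝ be continuous, differentiable on (0, Z], solve the system there, and satisfy for all z ∈ (0, Z]: 1/3 < ω(z), ω(z)² ≤ ρ₀/3, ω(z) < ρ(z) < ρ₀, and ρ(z)·ω(z) ≤ ρ₀/3 (these bounds imply 1 − y*²z²ω(z)² ≥ 1/2 on (0,Z]). Let P, W : [0, Z] → ℝ be continuously differentiable with P(0) = 1, W(0) = 0, solving for z ∈ (0, Z] the variational system: W' = −(3/z)·W + [4y*²zω(ρ−ω)/(1 − y*²z²ω²)²]·W − [2y*²zω²/(1 − y*²z²ω²)]·W + [2y*²zω²/(1 − y*²z²ω²)]·P, and P' = −[2y*²zω(ρ−ω)/(1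 − y*²z²ω²) + 2y*²zωρ/(1 − y*²z²ω²)]·P − [2y*²z(ρ−ω)ρ/(1 − y*²z²ω²) − 2y*²zωρ/(1 − y*²z²ω²) + 4y*⁴z³ω²ρ(ρ−ω)/(1 − y*²z²ω²)²]·W. Then P(z) > 0 for all z ∈ [0, Z]. -/
set_option maxHeartbeats 4000000

private lemma div_le_twice {N M d : ℝ} (hN : 0 ≤ N) (hNM : N ≤ M) (hd : 1/2 ≤ d) :
    N / d ≤ 2 * M := by
  have hd0 : (0:ℝ) < d := by linarith
  rw [div_le_iff₀ hd0]
  nlinarith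

private lemma div_sq_le_four {N M d : ℝ} (hN : 0 ≤ N) (hNM : N ≤ M) (hd : 1/2 ≤ d) :
    N / d ^ 2 ≤ 4 * M := by
  have hd0 : (0:ℝ) < d := by linarith
  rw [div_le_iff₀ (by positivity)]
  nlinarith [mul_nonneg (by linarith : (0:ℝ) ≤ d - 1/2) (by linarith : (0:ℝ) ≤ d + 1/2)]

private lemma key_ineq (x ρ₀ A B C E G K u w : ℝ) (hx : 0 < x) (hρ : 1/3 ≤ ρ₀)
    (hx2 : x^2*ρ₀ ≤ 1/5000)
    (hA0 : 0 ≤ A) (hA1 : A ≤ 12*x*ρ₀) (hB0 : 0 ≤ B) (hB1 : B ≤ 12*x*ρ₀)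
    (hC0 : 0 ≤ C) (hC1 : C ≤ 36*x*ρ₀^2) (hE0 : 0 ≤ E) (hE1 : E ≤ 48*x*ρ₀)
    (hG0 : 0 ≤ G) (hG1 : G ≤ 12*x*ρ₀) (hK0 : 0 ≤ K) (hK1 : K ≤ x*ρ₀^2) :
    2*(u-1)*(-(A+B)*u - (C-B+K)*w) + ρ₀*(2*w*(-(3/x)*w + E*w - G*w + G*u))
      ≤ (96*ρ₀*x + 10144*ρ₀^3*x^3)*((u-1)^2 + ρ₀*w^2 + 1) := by
  have hρ0 : (0:ℝ) < ρ₀ := by linarith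
  have hxρ2 : (0:ℝ) ≤ x*ρ₀*(3*ρ₀-1) :=
    mul_nonneg (mul_nonneg hx.le hρ0.le) (by linarith)
  have hb_ub : C - B + K ≤ 73*x*ρ₀^2 := by linarith [hxρ2]
  have hb_lb : -(73*x*ρ₀^2) ≤ C - B + K := by linarith [hxρ2]
  have hb2 : (C - B + K)^2 ≤ 5329*(x^2*ρ₀^4) := by
    nlinarith [sq_nonneg (C-B+K), mul_nonneg (mul_nonneg hx.le hρ0.le) hx.le,
      mul_nonneg (by linarith : (0:ℝ) ≤ 73*x*ρ₀^2 - (C-B+K))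
      (by linarith : (0:ℝ) ≤ C - B + K + 73*x*ρ₀^2),mul_nonneg (by linarith : (0:ℝ) ≤ 73*x*ρ₀^2 - (C-B+K))
      (by linarith : (0:ℝ) ≤ C - B + K + 73*x*ρ₀^2)]
  have q1 : x*(-2*(A+B)*u*(u-1)) ≤ 24*x^2*ρ₀*(1+(u-1)^2) := by
    linarith [mul_nonneg (mul_nonneg hx.le (by linarith : (0:ℝ) ≤ A+B)) (sq_nonneg (u-1)),
               mul_nonneg (mul_nonneg hx.le (by linarith : (0:ℝ) ≤ A+B)) (sq_nonneg u),
               mul_nonneg (mul_nonneg hx.le (by linarith : (0:ℝ) ≤ 24*x*ρ₀ - (A+B))) (sq_nonneg (u-1)),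
               mul_nonneg hx.le (by linarith : (0:ℝ) ≤ 24*x*ρ₀ - (A+B))]
  have q2 : x*(-2*(C-B+K)*w*(u-1)) ≤ ρ₀*w^2 + 5329*x^4*ρ₀^3*(u-1)^2 := by
    have h1 := sq_nonneg (ρ₀*w + x*(C-B+K)*(u-1))
    have h3 : x^2*(C-B+K)^2*(u-1)^2 ≤ 5329*x^4*ρ₀^4*(u-1)^2 := by
      linarith [mul_le_mul_of_nonneg_right hb2 (mul_nonneg (sq_nonneg x) (sq_nonneg (u-1)))]
    have h4 : ρ₀*(x*(-2*(C-B+K)*w*(u-1))) ≤ ρ₀*(ρ₀*w^2 + 5329*x^4*ρ₀^3*(u-1)^2) := by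
      linarith [h1, h3]
    exact le_of_mul_le_mul_left h4 hρ0
  have q3 : x*(2*ρ₀*(E-G)*w^2) ≤ ρ₀*w^2 := by
    linarith [mul_nonneg (mul_nonneg hρ0.le hx.le) (mul_nonneg hG0 (sq_nonneg w)),
               mul_le_mul_of_nonneg_right hE1 (mul_nonneg (mul_nonneg hρ0.le hx.le) (sq_nonneg w)),
               mul_le_mul_of_nonneg_right hx2 (mul_nonneg hρ0.le (sq_nonneg w)),
               mul_nonneg hρ0.le (sq_nonneg w)]
  have q4 : x*(2*ρ₀*G*w*u) ≤ 2*(ρ₀*w^2) + 144*x^4*ρ₀^3*(u-1)^2 + 144*x^4*ρ₀^3 := by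
    have hG2 : G^2 ≤ 144*(x^2*ρ₀^2) := by
      nlinarith [mul_le_mul hG1 hG1 hG0 (by positivity : (0:ℝ) ≤ 12*x*ρ₀)]
    have s1 : (0:ℝ) ≤ ρ₀*(w - G*x*(u-1))^2 := by positivity
    have s3 : (0:ℝ) ≤ ρ₀*(w - G*x)^2 := by positivity
    have m1 : ρ₀*G^2*x^2*(u-1)^2 ≤ 144*x^4*ρ₀^3*(u-1)^2 := by
      linarith [mul_le_mul_of_nonneg_right hG2 (mul_nonneg (mul_nonneg hρ0.le (sq_nonneg x)) (sq_nonneg (u-1)))]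
    have m2 : ρ₀*G^2*x^2 ≤ 144*x^4*ρ₀^3 := by
      linarith [mul_le_mul_of_nonneg_right hG2 (mul_nonneg hρ0.le (sq_nonneg x))]
    linarith [s1, s3, m1, m2]
  have hmain : x*(2*(u-1)*(-(A+B)*u - (C-B+K)*w) + 2*ρ₀*(E-G)*w^2 + 2*ρ₀*G*w*u) - 6*(ρ₀*w^2)
      ≤ ((96*ρ₀*x + 10144*ρ₀^3*x^3)*((u-1)^2 + ρ₀*w^2 + 1))*x := by
    have n1 : (0:ℝ) ≤ x^2*ρ₀*(u-1)^2 := by positivity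
    have n2 : (0:ℝ) ≤ x^4*ρ₀^3*(u-1)^2 := by positivity
    have n3 : (0:ℝ) ≤ x^2*ρ₀ := by positivity
    have n4 : (0:ℝ) ≤ x^4*ρ₀^3 := by positivity
    have n5 : (0:ℝ) ≤ ρ₀*w^2 := by positivity
    have n6 : (0:ℝ) ≤ (96*ρ₀*x + 10144*ρ₀^3*x^3)*(ρ₀*w^2)*x := by positivity
    linarith [q1, q2, q3, q4, n1, n2, n3, n4, n5, n6]
  have heq : 2*(u-1)*(-(A+B)*u - (C-B+K)*w) + ρ₀*(2*w*(-(3/x)*w + E*w - G*w + G*u))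
      = (x*(2*(u-1)*(-(A+B)*u - (C-B+K)*w) + 2*ρ₀*(E-G)*w^2 + 2*ρ₀*G*w*u) - 6*(ρ₀*w^2))/x := by
    field_simp
    ring
  rw [heq, div_le_iff₀ hx]
  exact hmain

/-- Positivity of the variation `P = ∂_{ρ₀}ρ` on the spatial scale `z ≲ ρ₀^{-3/4}`:
monotonicity of the left solution in its initial density. -/
theorem variation_positive_on_small_scale :
    ∃ η : ℝ, 0 < η ∧
      ∀ (y ρ₀ : ℝ), y ∈ Set.Icc (2 : ℝ) 3 → 1 / 3 ≤ ρ₀ →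
      ∀ Z : ℝ, Z = η * ρ₀ ^ (-(3 : ℝ) / 4) →
      ∀ ρ ω P W : ℝ → ℝ,
        ContinuousOn ρ (Set.Icc 0 Z) → ContinuousOn ω (Set.Icc 0 Z) →
        (∀ z ∈ Set.Ioc (0 : ℝ) Z,
          DifferentiableAt ℝ ρ z ∧ DifferentiableAt ℝ ω z ∧ EPSys y ρ ω z) →
        (∀ z ∈ Set.Ioc (0 : ℝ) Z,
          1 / 3 < ω z ∧ (ω z) ^ 2 ≤ ρ₀ / 3 ∧ ω z < ρ z ∧ ρ z < ρ₀ ∧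
          ρ z * ω z ≤ ρ₀ / 3) →
        ContinuousOn P (Set.Icc 0 Z) → ContinuousOn W (Set.Icc 0 Z) →
        P 0 = 1 → W 0 = 0 →
        (∀ z ∈ Set.Ioc (0 : ℝ) Z,
          DifferentiableAt ℝ P z ∧ DifferentiableAt ℝ W z ∧
          deriv W z =
            -(3 / z) * W z
              + (4 * y ^ 2 * z * ω z * (ρ z - ω z) /
                  (1 - y ^ 2 * z ^ 2 * (ω z) ^ 2) ^ 2) * W z
              - (2 * y ^ 2 * z * (ω z) ^ 2 /
                  (1 - y ^ 2 * z ^ 2 * (ω z) ^ 2)) * W z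
              + (2 * y ^ 2 * z * (ω z) ^ 2 /
                  (1 - y ^ 2 * z ^ 2 * (ω z) ^ 2)) * P z ∧
          deriv P z =
            -(2 * y ^ 2 * z * ω z * (ρ z - ω z) /
                  (1 - y ^ 2 * z ^ 2 * (ω z) ^ 2)
                + 2 * y ^ 2 * z * ω z * ρ z /
                  (1 - y ^ 2 * z ^ 2 * (ω z) ^ 2)) * P z
              - (2 * y ^ 2 * z * (ρ z - ω z) * ρ z /
                  (1 - y ^ 2 * z ^ 2 * (ω z) ^ 2)
                - 2 * y ^ 2 * z * ω z * ρ z /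
                  (1 - y ^ 2 * z ^ 2 * (ω z) ^ 2)
                + 4 * y ^ 4 * z ^ 3 * (ω z) ^ 2 * ρ z * (ρ z - ω z) /
                  (1 - y ^ 2 * z ^ 2 * (ω z) ^ 2) ^ 2) * W z) →
        ∀ z ∈ Set.Icc (0 : ℝ) Z, 0 < P z := by
  refine ⟨1/100, by norm_num, ?_⟩
  intro y ρ₀ hy hρ Z hZ ρ ω P W hρc hωc hode hbnd hPc hWc hP0 hW0 hvar
  have hρpos : (0:ℝ) < ρ₀ := by linarith
  have hZpos : 0 < Z := by
    rw [hZ]; exact mul_pos (by norm_num) (Real.rpow_pos_of_pos hρpos _)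
  -- scale facts
  have ht4 : (ρ₀ ^ (-(3:ℝ)/4))^4 * ρ₀^3 = 1 := by
    have h1 : (ρ₀ ^ (-(3:ℝ)/4))^(4:ℕ) = ρ₀ ^ (-3 : ℝ) := by
      rw [← Real.rpow_natCast (ρ₀ ^ (-(3:ℝ)/4)) 4, ← Real.rpow_mul hρpos.le]
      norm_num
    have h2 : (ρ₀:ℝ)^(3:ℕ) = ρ₀ ^ (3:ℝ) := (Real.rpow_natCast ρ₀ 3).symm
    rw [h1, h2, ← Real.rpow_add hρpos]
    rw [show (-3:ℝ)+3 = 0 by norm_num, Real.rpow_zero]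
  have hZ4 : Z^4*ρ₀^3 = ((1:ℝ)/100)^4 := by
    rw [hZ, mul_pow, mul_assoc, ht4, mul_one]
  have hZ2 : Z^2*ρ₀ ≤ 1/5000 := by
    have h0 : (0:ℝ) ≤ Z^2*ρ₀ := by positivity
    have h1 : (Z^2*ρ₀)^2*ρ₀ = ((1:ℝ)/100)^4 := by rw [← hZ4]; ring
    have h2 : (Z^2*ρ₀)^2 ≤ 3*((1:ℝ)/100)^4 := by
      nlinarith [mul_nonneg (sq_nonneg (Z^2*ρ₀)) (by linarith : (0:ℝ) ≤ ρ₀ - 1/3)]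
    nlinarith [h0, h2]
  -- derivative of the Lyapunov function is nonpositive on (0, Z)
  have hder : ∀ x ∈ Set.Ioo (0:ℝ) Z, ∃ g : ℝ,
      HasDerivAt (fun t => ((P t - 1)^2 + ρ₀*(W t)^2 + 1) *
        Real.exp (-(48*ρ₀*t^2 + 2536*ρ₀^3*t^4))) g x ∧ g ≤ 0 := by
    intro x hx
    have hx0 : 0 < x := hx.1
    have hxZ : x ≤ Z := hx.2.le
    obtain ⟨hPd, hWd, hWeq, hPeq⟩ := hvar x ⟨hx0, hxZ⟩
    obtain ⟨ho13, ho2, hor, hrρ, hro3⟩ := hbnd x ⟨hx0, hxZ⟩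
    have ho0 : 0 < ω x := by linarith
    have hr0 : 0 < ρ x := by linarith
    have hy9 : y^2 ≤ 9 := by nlinarith [hy.1, hy.2]
    have h2y : (0:ℝ) ≤ 2*y^2 := by positivity
    have hy81 : y^4 ≤ 81 := by
      nlinarith [mul_nonneg (by nlinarith [hy.1, hy.2] : (0:ℝ) ≤ 9 - y^2)
        (by positivity : (0:ℝ) ≤ 9 + y^2)]
    have hx2 : x^2*ρ₀ ≤ 1/5000 := by
      have hxx : x^2 ≤ Z^2 := pow_le_pow_left₀ hx0.le hxZ 2
      linarith [mul_le_mul_of_nonneg_right hxx hρpos.le, hZ2]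
    -- denominator bound
    have hdb : y^2*x^2*(ω x)^2 ≤ 3*(x^2*ρ₀) := by
      linarith [mul_nonneg (sq_nonneg x) (mul_nonneg (by linarith : (0:ℝ) ≤ 9 - y^2) (sq_nonneg (ω x))),
                 mul_nonneg (sq_nonneg x) (by linarith : (0:ℝ) ≤ ρ₀/3 - (ω x)^2)]
    have hd : 1/2 ≤ 1 - y^2*x^2*(ω x)^2 := by linarith
    have hd0 : (0:ℝ) ≤ 1 - y^2*x^2*(ω x)^2 := by linarith
    -- numerator bounds
    have hNo : ω x*(ρ x - ω x) ≤ ρ₀/3 := by nlinarith [sq_nonneg (ω x), hro3]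
    have hto0 : (0:ℝ) ≤ ω x*(ρ x - ω x) := mul_nonneg ho0.le (by linarith)
    have hNA0 : (0:ℝ) ≤ 2*y^2*x*ω x*(ρ x - ω x) :=
      mul_nonneg (mul_nonneg (mul_nonneg h2y hx0.le) ho0.le) (by linarith)
    have hNA1 : 2*y^2*x*ω x*(ρ x - ω x) ≤ 6*x*ρ₀ := by
      linarith [mul_nonneg hx0.le (sub_nonneg.mpr hNo),
                 mul_nonneg (mul_nonneg hx0.le hto0) (sub_nonneg.mpr hy9)]
    have hNor : ω x*ρ x ≤ ρ₀/3 := by rw [mul_comm]; exact hro3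
    have htb0 : (0:ℝ) ≤ ω x*ρ x := mul_nonneg ho0.le hr0.le
    have hNB0 : (0:ℝ) ≤ 2*y^2*x*ω x*ρ x :=
      mul_nonneg (mul_nonneg (mul_nonneg h2y hx0.le) ho0.le) hr0.le
    have hNB1 : 2*y^2*x*ω x*ρ x ≤ 6*x*ρ₀ := by
      linarith [mul_nonneg hx0.le (sub_nonneg.mpr hNor),
                 mul_nonneg (mul_nonneg hx0.le htb0) (sub_nonneg.mpr hy9)]
    have hNr2 : (ρ x - ω x)*ρ x ≤ ρ₀^2 := by
      linarith [mul_nonneg ho0.le hr0.le,mul_nonneg (by linarith : (0:ℝ) ≤ ρ₀ - ρ x) (by linarith : (0:ℝ) ≤ ρ₀ + ρ x)]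
    have htc0 : (0:ℝ) ≤ (ρ x - ω x)*ρ x := mul_nonneg (by linarith) hr0.le
    have hNC0 : (0:ℝ) ≤ 2*y^2*x*(ρ x - ω x)*ρ x :=
      mul_nonneg (mul_nonneg (mul_nonneg h2y hx0.le) (by linarith)) hr0.le
    have hNC1 : 2*y^2*x*(ρ x - ω x)*ρ x ≤ 18*x*ρ₀^2 := by
      linarith [mul_nonneg hx0.le (sub_nonneg.mpr hNr2),
                 mul_nonneg (mul_nonneg hx0.le htc0) (sub_nonneg.mpr hy9)]
    have hNE0 : (0:ℝ) ≤ 4*y^2*x*ω x*(ρ x - ω x) := by linarith [hNA0]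
    have hNE1 : 4*y^2*x*ω x*(ρ x - ω x) ≤ 12*x*ρ₀ := by linarith [hNA1]
    have hNG0 : (0:ℝ) ≤ 2*y^2*x*(ω x)^2 :=
      mul_nonneg (mul_nonneg h2y hx0.le) (sq_nonneg _)
    have hNG1 : 2*y^2*x*(ω x)^2 ≤ 6*x*ρ₀ := by
      linarith [mul_nonneg hx0.le (sub_nonneg.mpr ho2),
                 mul_nonneg (mul_nonneg hx0.le (sq_nonneg (ω x))) (sub_nonneg.mpr hy9)]
    have ht2 : (0:ℝ) ≤ ρ x*(ρ x - ω x) := mul_nonneg hr0.le (by linarith)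
    have ht2' : ρ x*(ρ x - ω x) ≤ ρ₀^2 := by linarith [hNr2]
    have hi1 : (ω x)^2*(ρ x*(ρ x - ω x)) ≤ (ρ₀/3)*ρ₀^2 :=
      mul_le_mul ho2 ht2' ht2 (by positivity)
    have hi0 : (0:ℝ) ≤ (ω x)^2*(ρ x*(ρ x - ω x)) := mul_nonneg (sq_nonneg _) ht2
    have hy4x : 4*y^4*x^3 ≤ 324*x^3 := by
      linarith [mul_le_mul_of_nonneg_right hy81 (pow_nonneg hx0.le 3)]
    have h4x0 : (0:ℝ) ≤ 4*y^4*x^3 := by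
      have : (0:ℝ) ≤ x^3 := pow_nonneg hx0.le 3
      positivity
    have hNK0 : (0:ℝ) ≤ 4*y^4*x^3*(ω x)^2*ρ x*(ρ x - ω x) :=
      mul_nonneg (mul_nonneg (mul_nonneg h4x0 (sq_nonneg _)) hr0.le) (by linarith)
    have hNK1 : 4*y^4*x^3*(ω x)^2*ρ x*(ρ x - ω x) ≤ 108*x^3*ρ₀^3 := by
      linarith [mul_le_mul hy4x hi1 hi0 (by positivity : (0:ℝ) ≤ 324*x^3)]
    -- coefficient bounds
    have hA0 : (0:ℝ) ≤ 2*y^2*x*ω x*(ρ x - ω x)/(1 - y^2*x^2*(ω x)^2) := div_nonneg hNA0 hd0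
    have hA1 : 2*y^2*x*ω x*(ρ x - ω x)/(1 - y^2*x^2*(ω x)^2) ≤ 12*x*ρ₀ := by
      have := div_le_twice hNA0 hNA1 hd; linarith
    have hB0 : (0:ℝ) ≤ 2*y^2*x*ω x*ρ x/(1 - y^2*x^2*(ω x)^2) := div_nonneg hNB0 hd0
    have hB1 : 2*y^2*x*ω x*ρ x/(1 - y^2*x^2*(ω x)^2) ≤ 12*x*ρ₀ := by
      have := div_le_twice hNB0 hNB1 hd; linarith
    have hC0 : (0:ℝ) ≤ 2*y^2*x*(ρ x - ω x)*ρ x/(1 - y^2*x^2*(ω x)^2) := div_nonneg hNC0 hd0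
    have hC1 : 2*y^2*x*(ρ x - ω x)*ρ x/(1 - y^2*x^2*(ω x)^2) ≤ 36*x*ρ₀^2 := by
      have := div_le_twice hNC0 hNC1 hd; linarith
    have hE0 : (0:ℝ) ≤ 4*y^2*x*ω x*(ρ x - ω x)/(1 - y^2*x^2*(ω x)^2)^2 :=
      div_nonneg hNE0 (by positivity)
    have hE1 : 4*y^2*x*ω x*(ρ x - ω x)/(1 - y^2*x^2*(ω x)^2)^2 ≤ 48*x*ρ₀ := by
      have := div_sq_le_four hNE0 hNE1 hd; linarith
    have hG0 : (0:ℝ) ≤ 2*y^2*x*(ω x)^2/(1 - y^2*x^2*(ω x)^2) := div_nonneg hNG0 hd0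
    have hG1 : 2*y^2*x*(ω x)^2/(1 - y^2*x^2*(ω x)^2) ≤ 12*x*ρ₀ := by
      have := div_le_twice hNG0 hNG1 hd; linarith
    have hK0 : (0:ℝ) ≤ 4*y^4*x^3*(ω x)^2*ρ x*(ρ x - ω x)/(1 - y^2*x^2*(ω x)^2)^2 :=
      div_nonneg hNK0 (by positivity)
    have hK1 : 4*y^4*x^3*(ω x)^2*ρ x*(ρ x - ω x)/(1 - y^2*x^2*(ω x)^2)^2 ≤ x*ρ₀^2 := by
      have h432 := div_sq_le_four hNK0 hNK1 hd
      have hmm : 432*(x*ρ₀^2)*(x^2*ρ₀) ≤ 432*(x*ρ₀^2)*(1/5000) :=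
        mul_le_mul_of_nonneg_left hx2 (by positivity)
      linarith [h432, hmm, mul_nonneg hx0.le (sq_nonneg ρ₀)]
    -- the key differential inequality
    have key : 2*(P x - 1)*deriv P x + ρ₀*(2*W x*deriv W x)
        ≤ (96*ρ₀*x + 10144*ρ₀^3*x^3)*((P x - 1)^2 + ρ₀*(W x)^2 + 1) := by
      rw [hPeq, hWeq]
      exact key_ineq x ρ₀ _ _ _ _ _ _ (P x) (W x) hx0 hρ hx2
        hA0 hA1 hB0 hB1 hC0 hC1 hE0 hE1 hG0 hG1 hK0 hK1
    -- build the derivative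
    have hFd : HasDerivAt (fun t => (P t - 1)^2 + ρ₀*(W t)^2 + 1)
        (2*(P x - 1)*deriv P x + ρ₀*(2*W x*deriv W x)) x := by
      have h1 := (hPd.hasDerivAt.sub_const 1).pow (n := 2)
      have h2 := (hWd.hasDerivAt.pow (n := 2)).const_mul ρ₀
      convert (h1.add h2).add_const 1 using 1
      · rfl
      · rfl
      · funext t; simp only [Pi.pow_apply, Pi.add_apply]
      · push_cast; ring
    have h3 : HasDerivAt (fun t : ℝ => -(48*ρ₀*t^2 + 2536*ρ₀^3*t^4))
        (-(96*ρ₀*x + 10144*ρ₀^3*x^3)) x := by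
      have h4 := (hasDerivAt_pow 2 x).const_mul (48*ρ₀)
      have h5 := (hasDerivAt_pow 4 x).const_mul (2536*ρ₀^3)
      convert (h4.add h5).neg using 1
      · rfl
      · rfl
      · funext t; simp only [Pi.neg_apply, Pi.add_apply]
      · push_cast; ring
    have hexp := h3.exp
    refine ⟨_, hFd.mul hexp, ?_⟩
    have hrw : (2*(P x - 1)*deriv P x + ρ₀*(2*W x*deriv W x)) *
          Real.exp (-(48*ρ₀*x^2 + 2536*ρ₀^3*x^4))
        + ((P x - 1)^2 + ρ₀*(W x)^2 + 1) *
          (Real.exp (-(48*ρ₀*x^2 + 2536*ρ₀^3*x^4)) * -(96*ρ₀*x + 10144*ρ₀^3*x^3))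
        = Real.exp (-(48*ρ₀*x^2 + 2536*ρ₀^3*x^4)) *
          ((2*(P x - 1)*deriv P x + ρ₀*(2*W x*deriv W x))
            - (96*ρ₀*x + 10144*ρ₀^3*x^3)*((P x - 1)^2 + ρ₀*(W x)^2 + 1)) := by
      ring
    rw [hrw]
    exact mul_nonpos_iff.mpr (Or.inl ⟨(Real.exp_pos _).le, by linarith⟩)
  -- the Lyapunov function is antitone
  have hHc : ContinuousOn (fun t => ((P t - 1)^2 + ρ₀*(W t)^2 + 1) *
      Real.exp (-(48*ρ₀*t^2 + 2536*ρ₀^3*t^4))) (Set.Icc 0 Z) := by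
    apply ContinuousOn.mul
    · exact (((hPc.sub continuousOn_const).pow 2).add
        (continuousOn_const.mul (hWc.pow 2))).add continuousOn_const
    · exact (Real.continuous_exp.comp (by continuity)).continuousOn
  have hanti : AntitoneOn (fun t => ((P t - 1)^2 + ρ₀*(W t)^2 + 1) *
      Real.exp (-(48*ρ₀*t^2 + 2536*ρ₀^3*t^4))) (Set.Icc 0 Z) := by
    apply antitoneOn_of_deriv_nonpos (convex_Icc 0 Z) hHc
    · intro t ht
      rw [interior_Icc] at ht
      obtain ⟨g, hg, _⟩ := hder t ht
      exact hg.differentiableAt.differentiableWithinAt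
    · intro t ht
      rw [interior_Icc] at ht
      obtain ⟨g, hg, hgle⟩ := hder t ht
      rw [hg.deriv]
      exact hgle
  intro z hz
  have h1 : ((P z - 1)^2 + ρ₀*(W z)^2 + 1) * Real.exp (-(48*ρ₀*z^2 + 2536*ρ₀^3*z^4))
      ≤ ((P 0 - 1)^2 + ρ₀*(W 0)^2 + 1) * Real.exp (-(48*ρ₀*0^2 + 2536*ρ₀^3*0^4)) :=
    hanti (Set.left_mem_Icc.mpr hZpos.le) hz hz.1
  have h0 : ((P 0 - 1)^2 + ρ₀*(W 0)^2 + 1) * Real.exp (-(48*ρ₀*0^2 + 2536*ρ₀^3*0^4)) = 1 := by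
    rw [hP0, hW0]
    norm_num
  rw [h0] at h1
  have h2 : (P z - 1)^2 + ρ₀*(W z)^2 + 1 ≤ Real.exp (48*ρ₀*z^2 + 2536*ρ₀^3*z^4) := by
    have hp := (Real.exp_pos (48*ρ₀*z^2 + 2536*ρ₀^3*z^4)).le
    calc (P z - 1)^2 + ρ₀*(W z)^2 + 1
        = (((P z - 1)^2 + ρ₀*(W z)^2 + 1) * Real.exp (-(48*ρ₀*z^2 + 2536*ρ₀^3*z^4)))
          * Real.exp (48*ρ₀*z^2 + 2536*ρ₀^3*z^4) := by
          rw [mul_assoc, ← Real.exp_add,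
            show -(48*ρ₀*z^2 + 2536*ρ₀^3*z^4) + (48*ρ₀*z^2 + 2536*ρ₀^3*z^4) = 0 by ring,
            Real.exp_zero, mul_one]
      _ ≤ 1 * Real.exp (48*ρ₀*z^2 + 2536*ρ₀^3*z^4) := mul_le_mul_of_nonneg_right h1 hp
      _ = _ := one_mul _
  have hc : 48*ρ₀*z^2 + 2536*ρ₀^3*z^4 ≤ 1/100 := by
    have hz2 : z^2 ≤ Z^2 := pow_le_pow_left₀ hz.1 hz.2 2
    have hz4 : z^4 ≤ Z^4 := pow_le_pow_left₀ hz.1 hz.2 4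
    have c1 : 48*ρ₀*z^2 ≤ 48*(Z^2*ρ₀) := by linarith [mul_le_mul_of_nonneg_right hz2 hρpos.le]
    have c2 : 2536*ρ₀^3*z^4 ≤ 2536*(Z^4*ρ₀^3) := by
      linarith [mul_le_mul_of_nonneg_right hz4 (by positivity : (0:ℝ) ≤ ρ₀^3)]
    rw [hZ4] at c2
    norm_num at c2
    linarith [hZ2]
  have hexp2 : Real.exp (48*ρ₀*z^2 + 2536*ρ₀^3*z^4) < 2 := by
    have hlt : (48*ρ₀*z^2 + 2536*ρ₀^3*z^4) < Real.log 2 := by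
      have := Real.log_two_gt_d9
      linarith
    calc Real.exp (48*ρ₀*z^2 + 2536*ρ₀^3*z^4) < Real.exp (Real.log 2) := Real.exp_lt_exp.mpr hlt
      _ = 2 := Real.exp_log (by norm_num)
  nlinarith [h2, hexp2, mul_nonneg hρpos.le (sq_nonneg (W z)), sq_nonneg (P z)]
end
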